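/- arXiv:1207.5616 — 3 statements merged into one kernel-verified Lean document; each statement's English description precedes it below -/
import Mathlib

section
/- Alexander's trick: let n ≥ 1 and let h be a homeomorphism of the unit sphere S^{n-1} = {x ∈ ℝⁿ : ‖x‖ = 1} onto itself. Then there exists a homeomorphism H of the closed unit ball D^n = {x ∈ ℝⁿ : ‖x‖ ≤ 1} onto itself whose restriction to S^{n-1} equals h (explicitly, H(x) = ‖x‖ · h(x/‖x‖) for x ≠ 0 and H(0) = 0 works). -/
open Metric
open scoped Classical

section Alexander

variable {E : Type*} [NormedAddCommGroup E] [NormedSpace ℝ E]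

private lemma normalize_mem_sphere {x : E} (hx : x ≠ 0) :
    ‖x‖⁻¹ • x ∈ sphere (0 : E) 1 := by
  rw [mem_sphere_zero_iff_norm, norm_smul, norm_inv, norm_norm,
    inv_mul_cancel₀ (norm_ne_zero_iff.2 hx)]

/-- Cone extension of a map of the sphere. -/
noncomputable def coneExt (φ : sphere (0 : E) 1 → sphere (0 : E) 1) (x : E) : E :=
  if hx : x = 0 then 0 else ‖x‖ • (φ ⟨‖x‖⁻¹ • x, normalize_mem_sphere hx⟩ : E)

lemma coneExt_zero (φ : sphere (0 : E) 1 → sphere (0 : E) 1) : coneExt φ 0 = 0 :=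
  dif_pos rfl

lemma norm_coneExt (φ : sphere (0 : E) 1 → sphere (0 : E) 1) (x : E) :
    ‖coneExt φ x‖ = ‖x‖ := by
  by_cases hx : x = 0
  · simp [hx, coneExt_zero]
  · have h1 : ‖(φ ⟨‖x‖⁻¹ • x, normalize_mem_sphere hx⟩ : E)‖ = 1 :=
      mem_sphere_zero_iff_norm.1 (φ _).2
    rw [coneExt, dif_neg hx, norm_smul, norm_norm, h1, mul_one]

lemma coneExt_sphere (φ : sphere (0 : E) 1 → sphere (0 : E) 1) {x : E}
    (hx : x ∈ sphere (0 : E) 1) : coneExt φ x = (φ ⟨x, hx⟩ : E) := by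
  have hn : ‖x‖ = 1 := mem_sphere_zero_iff_norm.1 hx
  have hx0 : x ≠ 0 := by
    intro h0; rw [h0, norm_zero] at hn; exact one_ne_zero hn.symm
  rw [coneExt, dif_neg hx0]
  have : (⟨‖x‖⁻¹ • x, normalize_mem_sphere hx0⟩ : sphere (0 : E) 1) = ⟨x, hx⟩ := by
    ext; simp [hn]
  rw [this, hn, one_smul]

lemma coneExt_of_ne (φ : sphere (0 : E) 1 → sphere (0 : E) 1) {x : E} (hx : x ≠ 0) :
    coneExt φ x = ‖x‖ • (φ ⟨‖x‖⁻¹ • x, normalize_mem_sphere hx⟩ : E) := dif_neg hx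

lemma coneExt_comp (φ ψ : sphere (0 : E) 1 → sphere (0 : E) 1) (x : E) :
    coneExt φ (coneExt ψ x) = coneExt (φ ∘ ψ) x := by
  by_cases hx : x = 0
  · simp [hx, coneExt_zero]
  · have hxn : ‖x‖ ≠ 0 := norm_ne_zero_iff.2 hx
    set p : sphere (0 : E) 1 := ⟨‖x‖⁻¹ • x, normalize_mem_sphere hx⟩ with hp
    have h1 : coneExt ψ x = ‖x‖ • (ψ p : E) := coneExt_of_ne ψ hx
    have hy0 : coneExt ψ x ≠ 0 := by
      intro h0
      have := norm_coneExt ψ x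
      rw [h0, norm_zero] at this
      exact hxn this.symm
    have hyn : ‖coneExt ψ x‖ = ‖x‖ := norm_coneExt ψ x
    rw [coneExt_of_ne φ hy0, coneExt_of_ne (φ ∘ ψ) hx]
    have key : (⟨‖coneExt ψ x‖⁻¹ • coneExt ψ x, normalize_mem_sphere hy0⟩ :
        sphere (0 : E) 1) = ψ p := by
      ext
      show ‖coneExt ψ x‖⁻¹ • coneExt ψ x = (ψ p : E)
      rw [hyn, h1, smul_smul, inv_mul_cancel₀ hxn, one_smul]
    rw [key, hyn]
    rfl

lemma coneExt_id (x : E) : coneExt (fun y => y) x = x := by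
  by_cases hx : x = 0
  · simp [hx, coneExt_zero]
  · rw [coneExt, dif_neg hx]
    show ‖x‖ • (‖x‖⁻¹ • x) = x
    rw [smul_smul, mul_inv_cancel₀ (norm_ne_zero_iff.2 hx), one_smul]

lemma continuous_coneExt (φ : sphere (0 : E) 1 → sphere (0 : E) 1)
    (hφ : Continuous φ) : Continuous (coneExt φ) := by
  rw [continuous_iff_continuousAt]
  intro x
  by_cases hx : x = 0
  · subst hx
    rw [ContinuousAt, coneExt_zero]
    rw [tendsto_zero_iff_norm_tendsto_zero]
    simpa [norm_coneExt] using (continuous_norm (E := E)).tendsto 0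
  · -- continuous on the open set {0}ᶜ
    have hopen : IsOpen ({x : E | x ≠ 0}) := isOpen_compl_singleton
    have hmaps : Set.MapsTo (fun y : E => ‖y‖⁻¹ • y) {y : E | y ≠ 0}
        (sphere (0 : E) 1) := fun y hy => normalize_mem_sphere hy
    have hcon : ContinuousOn (fun y : E => ‖y‖⁻¹ • y) {y : E | y ≠ 0} := by
      apply ContinuousOn.smul
      · exact (continuousOn_id.norm).inv₀ (fun y hy => norm_ne_zero_iff.2 hy)
      · exact continuousOn_id
    have hr : Continuous (hmaps.restrict _ _ _) :=
      hcon.mapsToRestrict hmaps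
    have hG : Continuous (fun y : {y : E // y ≠ 0} =>
        ‖(y : E)‖ • (φ (hmaps.restrict _ _ _ y) : E)) :=
      (continuous_subtype_val.norm).smul
        (continuous_subtype_val.comp (hφ.comp hr))
    have heq : ∀ y : {y : E // y ≠ 0},
        coneExt φ (y : E) = ‖(y : E)‖ • (φ (hmaps.restrict _ _ _ y) : E) := by
      rintro ⟨y, hy⟩
      rw [coneExt, dif_neg hy]
      rfl
    have hcont : ContinuousOn (coneExt φ) {y : E | y ≠ 0} := by
      rw [continuousOn_iff_continuous_restrict]
      exact hG.congr (fun y => (heq y).symm)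
    exact hcont.continuousAt (hopen.mem_nhds hx)

end Alexander

/-- Alexander's trick: every homeomorphism of the unit sphere extends to a
homeomorphism of the closed unit ball. -/
theorem alexander_trick
    (n : ℕ) (hn : 1 ≤ n)
    (h : Metric.sphere (0 : EuclideanSpace ℝ (Fin n)) 1 ≃ₜ
         Metric.sphere (0 : EuclideanSpace ℝ (Fin n)) 1) :
    ∃ H : Metric.closedBall (0 : EuclideanSpace ℝ (Fin n)) 1 ≃ₜ
          Metric.closedBall (0 : EuclideanSpace ℝ (Fin n)) 1,
      ∀ (x : EuclideanSpace ℝ (Fin n)) (hx : x ∈ Metric.sphere (0 : EuclideanSpace ℝ (Fin n)) 1),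
        (H ⟨x, Metric.sphere_subset_closedBall hx⟩ : EuclideanSpace ℝ (Fin n))
          = (h ⟨x, hx⟩ : EuclideanSpace ℝ (Fin n)) := by
  set E := EuclideanSpace ℝ (Fin n)
  have hmemF : ∀ (φ : sphere (0 : E) 1 → sphere (0 : E) 1)
      (x : Metric.closedBall (0 : E) 1), coneExt φ (x : E) ∈ Metric.closedBall (0 : E) 1 := by
    intro φ x
    rw [mem_closedBall_zero_iff, norm_coneExt]
    exact mem_closedBall_zero_iff.1 x.2
  have hinv : ∀ (φ ψ : sphere (0 : E) 1 → sphere (0 : E) 1),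
      (∀ y, φ (ψ y) = y) → ∀ x : E, coneExt φ (coneExt ψ x) = x := by
    intro φ ψ hφψ x
    rw [coneExt_comp]
    have : (φ ∘ ψ) = fun y => y := funext hφψ
    rw [this, coneExt_id]
  let e : Metric.closedBall (0 : E) 1 ≃ Metric.closedBall (0 : E) 1 :=
    { toFun := fun x => ⟨coneExt h (x : E), hmemF _ x⟩
      invFun := fun x => ⟨coneExt h.symm (x : E), hmemF _ x⟩
      left_inv := fun x => Subtype.ext (hinv _ _ (fun y => h.symm_apply_apply y) x)
      right_inv := fun x => Subtype.ext (hinv _ _ (fun y => h.apply_symm_apply y) x) }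
  have hcont : Continuous e := by
    apply Continuous.subtype_mk
    exact (continuous_coneExt _ h.continuous).comp continuous_subtype_val
  haveI : CompactSpace (Metric.closedBall (0 : E) 1) :=
    isCompact_iff_compactSpace.1 (isCompact_closedBall 0 1)
  let H : Metric.closedBall (0 : E) 1 ≃ₜ Metric.closedBall (0 : E) 1 :=
    Continuous.homeoOfEquivCompactToT2 (f := e) hcont
  refine ⟨H, fun x hx => ?_⟩
  show coneExt (⇑h) x = _
  exact coneExt_sphere _ hx
end

section
/- Let n ≥ 1 and let M be a compact Hausdorff topological space. Suppose B₁ and B₂ are closed subsets of M with B₁ ∪ B₂ = M, and suppose there are homeomorphisms h₁ : B₁ → D^n and h₂ : B₂ → D^n onto the closed unit ball D^n = {x ∈ ℝⁿ : ‖x‖ ≤ 1} such that B₁ ∩ B₂ = h₁⁻¹(S^{n-1}) = h₂⁻¹(S^{n-1}), where S^{n-1} = {x ∈ ℝⁿ : ‖x‖ = 1}. Then M is homeomorphic to the unit sphere Sⁿ = {x ∈ ℝ^{n+1} : ‖x‖ = 1}. -/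
open Metric Set

noncomputable section

namespace UBS

variable {n : ℕ}

/-- Append a coordinate to a Euclidean vector. -/
def snocE (y : EuclideanSpace ℝ (Fin n)) (c : ℝ) : EuclideanSpace ℝ (Fin (n + 1)) :=
  (WithLp.equiv 2 (Fin (n + 1) → ℝ)).symm (Fin.snoc (WithLp.equiv 2 (Fin n → ℝ) y) c)

/-- Drop the last coordinate of a Euclidean vector. -/
def initE (z : EuclideanSpace ℝ (Fin (n + 1))) : EuclideanSpace ℝ (Fin n) :=
  (WithLp.equiv 2 (Fin n → ℝ)).symm (Fin.init (WithLp.equiv 2 (Fin (n + 1) → ℝ) z))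

lemma snocE_castSucc (y : EuclideanSpace ℝ (Fin n)) (c : ℝ) (i : Fin n) :
    snocE y c (Fin.castSucc i) = y i := by
  simp [snocE, PiLp.toLp_apply, Fin.snoc_castSucc, WithLp.equiv_apply]

lemma snocE_last (y : EuclideanSpace ℝ (Fin n)) (c : ℝ) :
    snocE y c (Fin.last n) = c := by
  simp [snocE, PiLp.toLp_apply, Fin.snoc_last]

lemma snocE_initE (z : EuclideanSpace ℝ (Fin (n + 1))) :
    snocE (initE z) (z (Fin.last n)) = z := by
  apply (WithLp.equiv 2 (Fin (n + 1) → ℝ)).injective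
  funext i
  induction i using Fin.lastCases with
  | last => simp [WithLp.equiv_apply, snocE_last]
  | cast j =>
      simp [WithLp.equiv_apply, snocE_castSucc, initE, PiLp.toLp_apply, Fin.init]

lemma norm_snocE_sq (y : EuclideanSpace ℝ (Fin n)) (c : ℝ) :
    ‖snocE y c‖ ^ 2 = ‖y‖ ^ 2 + c ^ 2 := by
  rw [EuclideanSpace.norm_eq, Real.sq_sqrt (by positivity), Fin.sum_univ_castSucc]
  rw [EuclideanSpace.norm_eq y, Real.sq_sqrt (by positivity)]
  simp [snocE_castSucc, snocE_last, sq_abs]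

lemma snocE_injective (y y' : EuclideanSpace ℝ (Fin n)) (c c' : ℝ)
    (h : snocE y c = snocE y' c') : y = y' ∧ c = c' := by
  constructor
  · ext i
    have := congrFun (congrArg (WithLp.equiv 2 (Fin (n+1) → ℝ)) h) (Fin.castSucc i)
    simpa [WithLp.equiv_apply, snocE_castSucc] using this
  · have := congrFun (congrArg (WithLp.equiv 2 (Fin (n+1) → ℝ)) h) (Fin.last n)
    simpa [WithLp.equiv_apply, snocE_last] using this

lemma continuous_snocE : Continuous fun p : EuclideanSpace ℝ (Fin n) × ℝ => snocE p.1 p.2 := by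
  apply (PiLp.continuous_toLp 2 (fun _ : Fin (n+1) => ℝ)).comp
  apply continuous_pi
  intro i
  induction i using Fin.lastCases with
  | last => simpa [Fin.snoc_last] using continuous_snd
  | cast j =>
      simp only [Fin.snoc_castSucc]
      exact (continuous_apply j).comp ((PiLp.continuous_ofLp 2 (fun _ : Fin n => ℝ)).comp continuous_fst)


/-- Hemisphere embedding with sign `σ`. -/
def hemi (σ : ℝ) (y : EuclideanSpace ℝ (Fin n)) : EuclideanSpace ℝ (Fin (n + 1)) :=
  snocE y (σ * Real.sqrt (1 - ‖y‖ ^ 2))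

lemma continuous_hemi (σ : ℝ) : Continuous fun y : EuclideanSpace ℝ (Fin n) => hemi σ y := by
  unfold hemi
  exact continuous_snocE.comp (continuous_id.prodMk
    (continuous_const.mul ((continuous_const.sub (continuous_norm.pow 2)).sqrt)))

lemma hemi_mem_sphere (σ : ℝ) (hσ : σ = 1 ∨ σ = -1) (y : EuclideanSpace ℝ (Fin n))
    (hy : ‖y‖ ≤ 1) : hemi σ y ∈ Metric.sphere (0 : EuclideanSpace ℝ (Fin (n + 1))) 1 := by
  rw [mem_sphere_zero_iff_norm]
  have h1 : 1 - ‖y‖ ^ 2 ≥ 0 := by nlinarith [norm_nonneg y]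
  have h2 : ‖hemi σ y‖ ^ 2 = 1 := by
    rw [hemi, norm_snocE_sq, mul_pow, Real.sq_sqrt h1]
    rcases hσ with h | h <;> rw [h] <;> ring
  nlinarith [norm_nonneg (hemi σ y)]

lemma hemi_injective (σ : ℝ) (y y' : EuclideanSpace ℝ (Fin n))
    (h : hemi σ y = hemi σ y') : y = y' := (snocE_injective _ _ _ _ h).1

lemma hemi_eq_of_norm_one (y : EuclideanSpace ℝ (Fin n)) (hy : ‖y‖ = 1) (σ σ' : ℝ) :
    hemi σ y = hemi σ' y := by
  unfold hemi
  rw [hy]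
  norm_num

lemma hemi_mixed {n : ℕ} {y y' : EuclideanSpace ℝ (Fin n)} (hy : ‖y‖ ≤ 1) (hy' : ‖y'‖ ≤ 1)
    (h : hemi 1 y = hemi (-1) y') : ‖y‖ = 1 ∧ ‖y'‖ = 1 ∧ y = y' := by
  obtain ⟨h1, h2⟩ := snocE_injective _ _ _ _ h
  have h3 := Real.sqrt_nonneg (1 - ‖y‖ ^ 2)
  have h4 := Real.sqrt_nonneg (1 - ‖y'‖ ^ 2)
  have ha : Real.sqrt (1 - ‖y‖ ^ 2) = 0 := by nlinarith
  have hb : Real.sqrt (1 - ‖y'‖ ^ 2) = 0 := by nlinarith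
  have ha' : 1 - ‖y‖ ^ 2 ≤ 0 := Real.sqrt_eq_zero'.1 ha
  have hb' : 1 - ‖y'‖ ^ 2 ≤ 0 := Real.sqrt_eq_zero'.1 hb
  refine ⟨by nlinarith [norm_nonneg y], by nlinarith [norm_nonneg y'], h1⟩

section Radial

variable (φ : Metric.sphere (0 : EuclideanSpace ℝ (Fin n)) 1 →
    Metric.sphere (0 : EuclideanSpace ℝ (Fin n)) 1)

lemma unit_mem_sphere {v : EuclideanSpace ℝ (Fin n)} (hv : v ≠ 0) :
    ‖v‖⁻¹ • v ∈ Metric.sphere (0 : EuclideanSpace ℝ (Fin n)) 1 := by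
  rw [mem_sphere_zero_iff_norm, norm_smul, norm_inv, norm_norm,
    inv_mul_cancel₀ (norm_ne_zero_iff.2 hv)]

open Classical in
/-- Radial extension of a self-map of the sphere to the ambient space. -/
def radial (v : EuclideanSpace ℝ (Fin n)) : EuclideanSpace ℝ (Fin n) :=
  if h : v = 0 then 0 else ‖v‖ • (φ ⟨‖v‖⁻¹ • v, unit_mem_sphere h⟩ : EuclideanSpace ℝ (Fin n))

lemma norm_radial (v : EuclideanSpace ℝ (Fin n)) : ‖radial φ v‖ = ‖v‖ := by
  unfold radial
  split
  · simp_all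
  · rename_i h
    rw [norm_smul, norm_norm, mem_sphere_zero_iff_norm.1 (φ _).2, mul_one]

lemma radial_sphere (v : EuclideanSpace ℝ (Fin n)) (hv : ‖v‖ = 1) :
    radial φ v = (φ ⟨v, mem_sphere_zero_iff_norm.2 hv⟩ : EuclideanSpace ℝ (Fin n)) := by
  have hv0 : v ≠ 0 := by intro h; rw [h, norm_zero] at hv; norm_num at hv
  rw [radial, dif_neg hv0]
  have : (⟨‖v‖⁻¹ • v, unit_mem_sphere hv0⟩ :
      Metric.sphere (0 : EuclideanSpace ℝ (Fin n)) 1) = ⟨v, mem_sphere_zero_iff_norm.2 hv⟩ := by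
    apply Subtype.ext
    show ‖v‖⁻¹ • v = v
    rw [hv, inv_one, one_smul]
  rw [this]
  have h1 : ‖v‖ • (φ ⟨v, mem_sphere_zero_iff_norm.2 hv⟩ : EuclideanSpace ℝ (Fin n)) =
      (1 : ℝ) • (φ ⟨v, mem_sphere_zero_iff_norm.2 hv⟩ : EuclideanSpace ℝ (Fin n)) :=
    congrArg (fun t : ℝ => t • (φ ⟨v, mem_sphere_zero_iff_norm.2 hv⟩ : EuclideanSpace ℝ (Fin n))) hv
  rw [h1, one_smul]

lemma radial_injective (hφ : Function.Injective φ) : Function.Injective (radial φ) := by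
  intro v w h
  have hn : ‖v‖ = ‖w‖ := by rw [← norm_radial φ v, ← norm_radial φ w, h]
  by_cases hv : v = 0
  · have : ‖w‖ = 0 := by rw [← hn, hv, norm_zero]
    rw [hv, norm_eq_zero.1 this]
  · have hw : w ≠ 0 := by
      intro hw; rw [hw, norm_zero, norm_eq_zero] at hn; exact hv hn
    rw [radial, dif_neg hv, radial, dif_neg hw] at h
    have hvn : ‖v‖ ≠ 0 := norm_ne_zero_iff.2 hv
    have hwn : ‖w‖ ≠ 0 := norm_ne_zero_iff.2 hw
    have h2 : (φ ⟨‖v‖⁻¹ • v, unit_mem_sphere hv⟩ : EuclideanSpace ℝ (Fin n)) =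
        (φ ⟨‖w‖⁻¹ • w, unit_mem_sphere hw⟩ : EuclideanSpace ℝ (Fin n)) := by
      have h5 := congrArg (fun z => ‖v‖⁻¹ • z) h
      simp only [smul_smul, inv_mul_cancel₀ hvn, one_smul] at h5
      have h6 : ‖v‖⁻¹ * ‖w‖ = 1 := by rw [hn]; exact inv_mul_cancel₀ hwn
      rw [h6, one_smul] at h5
      exact h5
    have h3 := hφ (Subtype.ext h2)
    have h4 : ‖v‖⁻¹ • v = ‖w‖⁻¹ • w := congrArg Subtype.val h3
    have h7 := congrArg (fun z => ‖v‖ • z) h4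
    simp only [smul_smul, mul_inv_cancel₀ hvn, one_smul] at h7
    have h8 : ‖v‖ * ‖w‖⁻¹ = 1 := by rw [hn]; exact mul_inv_cancel₀ hwn
    rw [h8, one_smul] at h7
    exact h7

lemma radial_surj (hφ : Function.Surjective φ) (w : EuclideanSpace ℝ (Fin n)) :
    ∃ v, radial φ v = w ∧ ‖v‖ = ‖w‖ := by
  by_cases hw : w = 0
  · exact ⟨0, by rw [radial, dif_pos rfl, hw], by rw [hw]⟩
  · obtain ⟨s, hs⟩ := hφ ⟨‖w‖⁻¹ • w, unit_mem_sphere hw⟩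
    refine ⟨‖w‖ • (s : EuclideanSpace ℝ (Fin n)), ?_, ?_⟩
    · have hwn : ‖w‖ ≠ 0 := norm_ne_zero_iff.2 hw
      have hs1 : ‖(s : EuclideanSpace ℝ (Fin n))‖ = 1 := mem_sphere_zero_iff_norm.1 s.2
      have hv0 : ‖w‖ • (s : EuclideanSpace ℝ (Fin n)) ≠ 0 := by
        rw [smul_ne_zero_iff]
        exact ⟨hwn, fun h => by rw [h, norm_zero] at hs1; norm_num at hs1⟩
      rw [radial, dif_neg hv0]
      have hnv : ‖‖w‖ • (s : EuclideanSpace ℝ (Fin n))‖ = ‖w‖ := by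
        rw [norm_smul, norm_norm, hs1, mul_one]
      have harg : (⟨‖‖w‖ • (s : EuclideanSpace ℝ (Fin n))‖⁻¹ • ‖w‖ • (s : EuclideanSpace ℝ (Fin n)),
          unit_mem_sphere hv0⟩ : Metric.sphere (0 : EuclideanSpace ℝ (Fin n)) 1) = s := by
        apply Subtype.ext
        show ‖‖w‖ • (s : EuclideanSpace ℝ (Fin n))‖⁻¹ • ‖w‖ • (s : EuclideanSpace ℝ (Fin n)) =
          (s : EuclideanSpace ℝ (Fin n))
        rw [hnv, smul_smul, inv_mul_cancel₀ hwn, one_smul]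
      rw [harg, hnv, hs]
      rw [smul_smul, mul_inv_cancel₀ hwn, one_smul]
    · rw [norm_smul, norm_norm, mem_sphere_zero_iff_norm.1 s.2, mul_one]

lemma continuous_radial (hφ : Continuous φ) : Continuous (radial φ) := by
  rw [continuous_iff_continuousAt]
  intro v
  by_cases hv : v = 0
  · subst hv
    have h0 : radial φ 0 = 0 := by rw [radial, dif_pos rfl]
    rw [ContinuousAt, h0]
    rw [tendsto_zero_iff_norm_tendsto_zero]
    have : (fun v => ‖radial φ v‖) = fun v => ‖v‖ := funext (norm_radial φ)
    rw [this]
    simpa using continuous_norm.tendsto (0 : EuclideanSpace ℝ (Fin n))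
  · have hopen : IsOpen {v : EuclideanSpace ℝ (Fin n) | v ≠ 0} := isOpen_ne
    apply ContinuousOn.continuousAt ?_ (hopen.mem_nhds hv)
    rw [continuousOn_iff_continuous_restrict]
    have : Set.domRestrict {v : EuclideanSpace ℝ (Fin n) | v ≠ 0} (radial φ) = fun (v : {v : EuclideanSpace ℝ (Fin n) | v ≠ 0}) =>
        ‖(v : EuclideanSpace ℝ (Fin n))‖ •
          (φ ⟨‖(v : EuclideanSpace ℝ (Fin n))‖⁻¹ • (v : EuclideanSpace ℝ (Fin n)),
            unit_mem_sphere v.2⟩ : EuclideanSpace ℝ (Fin n)) := by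
      funext v
      simp only [Set.domRestrict_apply, radial, dif_neg v.2]
    rw [this]
    have hvne : ∀ v : {v : EuclideanSpace ℝ (Fin n) | v ≠ 0},
        ‖(v : EuclideanSpace ℝ (Fin n))‖ ≠ 0 := fun v => norm_ne_zero_iff.2 v.2
    apply Continuous.smul (continuous_norm.comp continuous_subtype_val)
    apply continuous_subtype_val.comp
    apply hφ.comp
    apply Continuous.subtype_mk
    exact ((continuous_norm.comp continuous_subtype_val).inv₀ hvne).smul continuous_subtype_val

end Radial

end UBS
/-- A compact Hausdorff space that is the union of two closed subsets, each homeomorphic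
to the closed unit ball and meeting exactly along the preimages of the boundary sphere,
is homeomorphic to a sphere. -/
theorem union_of_two_balls_is_sphere
    (n : ℕ) (hn : 1 ≤ n)
    (M : Type*) [TopologicalSpace M] [CompactSpace M] [T2Space M]
    (B₁ B₂ : Set M) (hB₁ : IsClosed B₁) (hB₂ : IsClosed B₂)
    (hcover : B₁ ∪ B₂ = Set.univ)
    (h₁ : B₁ ≃ₜ Metric.closedBall (0 : EuclideanSpace ℝ (Fin n)) 1)
    (h₂ : B₂ ≃ₜ Metric.closedBall (0 : EuclideanSpace ℝ (Fin n)) 1)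
    (hbd₁ : B₁ ∩ B₂ = Subtype.val ''
      {x : B₁ | (h₁ x : EuclideanSpace ℝ (Fin n)) ∈
        Metric.sphere (0 : EuclideanSpace ℝ (Fin n)) 1})
    (hbd₂ : B₁ ∩ B₂ = Subtype.val ''
      {x : B₂ | (h₂ x : EuclideanSpace ℝ (Fin n)) ∈
        Metric.sphere (0 : EuclideanSpace ℝ (Fin n)) 1}) :
    Nonempty (M ≃ₜ Metric.sphere (0 : EuclideanSpace ℝ (Fin (n + 1))) 1) := by
  classical
  -- membership facts
  have hmem₁ : ∀ x : B₁, (h₁ x : EuclideanSpace ℝ (Fin n)) ∈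
      Metric.sphere (0 : EuclideanSpace ℝ (Fin n)) 1 → (x : M) ∈ B₁ ∩ B₂ := by
    intro x hx
    rw [hbd₁]
    exact ⟨x, hx, rfl⟩
  have hmem₂ : ∀ x : B₂, (h₂ x : EuclideanSpace ℝ (Fin n)) ∈
      Metric.sphere (0 : EuclideanSpace ℝ (Fin n)) 1 → (x : M) ∈ B₁ ∩ B₂ := by
    intro x hx
    rw [hbd₂]
    exact ⟨x, hx, rfl⟩
  have hmem₁' : ∀ x : B₁, (x : M) ∈ B₁ ∩ B₂ → (h₁ x : EuclideanSpace ℝ (Fin n)) ∈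
      Metric.sphere (0 : EuclideanSpace ℝ (Fin n)) 1 := by
    intro x hx
    rw [hbd₁] at hx
    obtain ⟨x', hx', he⟩ := hx
    rwa [Subtype.ext he] at hx'
  have hmem₂' : ∀ x : B₂, (x : M) ∈ B₁ ∩ B₂ → (h₂ x : EuclideanSpace ℝ (Fin n)) ∈
      Metric.sphere (0 : EuclideanSpace ℝ (Fin n)) 1 := by
    intro x hx
    rw [hbd₂] at hx
    obtain ⟨x', hx', he⟩ := hx
    rwa [Subtype.ext he] at hx'
  have memD : ∀ s : Metric.sphere (0 : EuclideanSpace ℝ (Fin n)) 1,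
      (s : EuclideanSpace ℝ (Fin n)) ∈ Metric.closedBall (0 : EuclideanSpace ℝ (Fin n)) 1 :=
    fun s => Metric.sphere_subset_closedBall s.2
  -- the transition map on the boundary sphere and its inverse
  have hstepΦ : ∀ s : Metric.sphere (0 : EuclideanSpace ℝ (Fin n)) 1,
      ((h₂.symm ⟨↑s, memD s⟩ : B₂) : M) ∈ B₁ := by
    intro s
    refine (hmem₂ _ ?_).1
    rw [h₂.apply_symm_apply]
    exact s.2
  have hstepΨ : ∀ s : Metric.sphere (0 : EuclideanSpace ℝ (Fin n)) 1,
      ((h₁.symm ⟨↑s, memD s⟩ : B₁) : M) ∈ B₂ := by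
    intro s
    refine (hmem₁ _ ?_).2
    rw [h₁.apply_symm_apply]
    exact s.2
  have hΦmem : ∀ s : Metric.sphere (0 : EuclideanSpace ℝ (Fin n)) 1,
      (h₁ ⟨↑(h₂.symm ⟨↑s, memD s⟩), hstepΦ s⟩ : EuclideanSpace ℝ (Fin n)) ∈
        Metric.sphere (0 : EuclideanSpace ℝ (Fin n)) 1 := by
    intro s
    apply hmem₁'
    refine hmem₂ _ ?_
    rw [h₂.apply_symm_apply]
    exact s.2
  have hΨmem : ∀ s : Metric.sphere (0 : EuclideanSpace ℝ (Fin n)) 1,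
      (h₂ ⟨↑(h₁.symm ⟨↑s, memD s⟩), hstepΨ s⟩ : EuclideanSpace ℝ (Fin n)) ∈
        Metric.sphere (0 : EuclideanSpace ℝ (Fin n)) 1 := by
    intro s
    apply hmem₂'
    refine hmem₁ _ ?_
    rw [h₁.apply_symm_apply]
    exact s.2
  let Φ : Metric.sphere (0 : EuclideanSpace ℝ (Fin n)) 1 →
      Metric.sphere (0 : EuclideanSpace ℝ (Fin n)) 1 :=
    fun s => ⟨(h₁ ⟨↑(h₂.symm ⟨↑s, memD s⟩), hstepΦ s⟩ : EuclideanSpace ℝ (Fin n)), hΦmem s⟩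
  let Ψ : Metric.sphere (0 : EuclideanSpace ℝ (Fin n)) 1 →
      Metric.sphere (0 : EuclideanSpace ℝ (Fin n)) 1 :=
    fun s => ⟨(h₂ ⟨↑(h₁.symm ⟨↑s, memD s⟩), hstepΨ s⟩ : EuclideanSpace ℝ (Fin n)), hΨmem s⟩
  -- characterization of Φ and Ψ
  have hΦval : ∀ (s : Metric.sphere (0 : EuclideanSpace ℝ (Fin n)) 1) (b : B₂)
      (hb : (b : M) ∈ B₁), (h₂ b : EuclideanSpace ℝ (Fin n)) = ↑s →
      (Φ s : EuclideanSpace ℝ (Fin n)) = ↑(h₁ ⟨↑b, hb⟩) := by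
    intro s b hb hsb
    show (h₁ ⟨↑(h₂.symm ⟨↑s, memD s⟩), hstepΦ s⟩ : EuclideanSpace ℝ (Fin n)) = _
    have e1 : h₂.symm ⟨↑s, memD s⟩ = b := by
      apply h₂.injective
      rw [Homeomorph.apply_symm_apply]
      exact Subtype.ext hsb.symm
    have e2 : (⟨↑(h₂.symm ⟨↑s, memD s⟩), hstepΦ s⟩ : B₁) = ⟨↑b, hb⟩ := by
      apply Subtype.ext
      show (↑(h₂.symm ⟨↑s, memD s⟩) : M) = ↑b
      rw [e1]
    rw [e2]
  have hΨval : ∀ (s : Metric.sphere (0 : EuclideanSpace ℝ (Fin n)) 1) (b : B₁)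
      (hb : (b : M) ∈ B₂), (h₁ b : EuclideanSpace ℝ (Fin n)) = ↑s →
      (Ψ s : EuclideanSpace ℝ (Fin n)) = ↑(h₂ ⟨↑b, hb⟩) := by
    intro s b hb hsb
    show (h₂ ⟨↑(h₁.symm ⟨↑s, memD s⟩), hstepΨ s⟩ : EuclideanSpace ℝ (Fin n)) = _
    have e1 : h₁.symm ⟨↑s, memD s⟩ = b := by
      apply h₁.injective
      rw [Homeomorph.apply_symm_apply]
      exact Subtype.ext hsb.symm
    have e2 : (⟨↑(h₁.symm ⟨↑s, memD s⟩), hstepΨ s⟩ : B₂) = ⟨↑b, hb⟩ := by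
      apply Subtype.ext
      show (↑(h₁.symm ⟨↑s, memD s⟩) : M) = ↑b
      rw [e1]
    rw [e2]
  have hΨΦ : ∀ s, Ψ (Φ s) = s := by
    intro s
    apply Subtype.ext
    have hb : (↑(⟨↑(h₂.symm ⟨↑s, memD s⟩), hstepΦ s⟩ : B₁) : M) ∈ B₂ :=
      (h₂.symm ⟨↑s, memD s⟩).2
    rw [hΨval (Φ s) ⟨↑(h₂.symm ⟨↑s, memD s⟩), hstepΦ s⟩ hb rfl]
    have e : (⟨↑(⟨↑(h₂.symm ⟨↑s, memD s⟩), hstepΦ s⟩ : B₁), hb⟩ : B₂) =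
        h₂.symm ⟨↑s, memD s⟩ := Subtype.ext rfl
    rw [e, Homeomorph.apply_symm_apply]
  have hΦΨ : ∀ s, Φ (Ψ s) = s := by
    intro s
    apply Subtype.ext
    have hb : (↑(⟨↑(h₁.symm ⟨↑s, memD s⟩), hstepΨ s⟩ : B₂) : M) ∈ B₁ :=
      (h₁.symm ⟨↑s, memD s⟩).2
    rw [hΦval (Ψ s) ⟨↑(h₁.symm ⟨↑s, memD s⟩), hstepΨ s⟩ hb rfl]
    have e : (⟨↑(⟨↑(h₁.symm ⟨↑s, memD s⟩), hstepΨ s⟩ : B₂), hb⟩ : B₁) =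
        h₁.symm ⟨↑s, memD s⟩ := Subtype.ext rfl
    rw [e, Homeomorph.apply_symm_apply]
  have hΦc : Continuous Φ := by
    exact Continuous.subtype_mk (continuous_subtype_val.comp (h₁.continuous.comp
      (Continuous.subtype_mk (continuous_subtype_val.comp (h₂.symm.continuous.comp
        (Continuous.subtype_mk continuous_subtype_val memD))) hstepΦ))) hΦmem
  have hΦinj : Function.Injective Φ := Function.LeftInverse.injective hΨΦ
  have hΦsurj : Function.Surjective Φ := Function.RightInverse.surjective hΦΨ
  -- the key transition identity
  have hkey : ∀ (x : M) (hx₁ : x ∈ B₁) (hx₂ : x ∈ B₂),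
      UBS.radial Φ (h₂ ⟨x, hx₂⟩ : EuclideanSpace ℝ (Fin n)) =
        (h₁ ⟨x, hx₁⟩ : EuclideanSpace ℝ (Fin n)) := by
    intro x hx₁ hx₂
    have hs : (h₂ ⟨x, hx₂⟩ : EuclideanSpace ℝ (Fin n)) ∈
        Metric.sphere (0 : EuclideanSpace ℝ (Fin n)) 1 := hmem₂' ⟨x, hx₂⟩ ⟨hx₁, hx₂⟩
    rw [UBS.radial_sphere Φ _ (mem_sphere_zero_iff_norm.1 hs)]
    exact hΦval _ ⟨x, hx₂⟩ hx₁ rfl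
  -- the glued map
  have memB₂of : ∀ {x : M}, x ∉ B₁ → x ∈ B₂ := by
    intro x hx
    have hx2 : x ∈ B₁ ∪ B₂ := by rw [hcover]; trivial
    exact hx2.resolve_left hx
  let F : M → EuclideanSpace ℝ (Fin (n + 1)) := fun x =>
    if hx : x ∈ B₁ then UBS.hemi 1 (h₁ ⟨x, hx⟩ : EuclideanSpace ℝ (Fin n))
    else UBS.hemi (-1) (UBS.radial Φ (h₂ ⟨x, memB₂of hx⟩ : EuclideanSpace ℝ (Fin n)))
  have hF₁ : ∀ (x : M) (hx : x ∈ B₁),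
      F x = UBS.hemi 1 (h₁ ⟨x, hx⟩ : EuclideanSpace ℝ (Fin n)) := by
    intro x hx
    show dite _ _ _ = _
    rw [dif_pos hx]
  have hF₂ : ∀ (x : M) (hx : x ∈ B₂),
      F x = UBS.hemi (-1) (UBS.radial Φ (h₂ ⟨x, hx⟩ : EuclideanSpace ℝ (Fin n))) := by
    intro x hx
    by_cases hx₁ : x ∈ B₁
    · rw [hF₁ x hx₁, hkey x hx₁ hx]
      exact UBS.hemi_eq_of_norm_one _
        (mem_sphere_zero_iff_norm.1 (hmem₁' ⟨x, hx₁⟩ ⟨hx₁, hx⟩)) 1 (-1)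
    · show dite _ _ _ = _
      rw [dif_neg hx₁]
  have hmemS : ∀ x : M, F x ∈ Metric.sphere (0 : EuclideanSpace ℝ (Fin (n + 1))) 1 := by
    intro x
    by_cases hx : x ∈ B₁
    · rw [hF₁ x hx]
      exact UBS.hemi_mem_sphere 1 (Or.inl rfl) _ (mem_closedBall_zero_iff.1 (h₁ ⟨x, hx⟩).2)
    · rw [hF₂ x (memB₂of hx)]
      apply UBS.hemi_mem_sphere (-1) (Or.inr rfl)
      rw [UBS.norm_radial]
      exact mem_closedBall_zero_iff.1 (h₂ ⟨x, memB₂of hx⟩).2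
  -- continuity
  have hFc : Continuous F := by
    rw [← continuousOn_univ, ← hcover]
    have hc₁ : ContinuousOn F B₁ := by
      rw [continuousOn_iff_continuous_restrict]
      have e : B₁.domRestrict F = fun x : B₁ =>
          UBS.hemi 1 (h₁ x : EuclideanSpace ℝ (Fin n)) := by
        funext x
        rw [Set.domRestrict_apply, hF₁ ↑x x.2, Subtype.coe_eta]
      rw [e]
      exact (UBS.continuous_hemi 1).comp (continuous_subtype_val.comp h₁.continuous)
    have hc₂ : ContinuousOn F B₂ := by
      rw [continuousOn_iff_continuous_restrict]
      have e : B₂.domRestrict F = fun x : B₂ =>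
          UBS.hemi (-1) (UBS.radial Φ (h₂ x : EuclideanSpace ℝ (Fin n))) := by
        funext x
        rw [Set.domRestrict_apply, hF₂ ↑x x.2, Subtype.coe_eta]
      rw [e]
      exact (UBS.continuous_hemi (-1)).comp ((UBS.continuous_radial Φ hΦc).comp
        (continuous_subtype_val.comp h₂.continuous))
    intro x hx
    apply ContinuousWithinAt.union
    · by_cases hx₁ : x ∈ B₁
      · exact hc₁ x hx₁
      · have hbot : nhdsWithin x B₁ = ⊥ := by
          rw [← Filter.not_neBot, ← mem_closure_iff_nhdsWithin_neBot, hB₁.closure_eq]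
          exact hx₁
        show Filter.Tendsto F (nhdsWithin x B₁) _
        rw [hbot]
        exact Filter.tendsto_bot
    · by_cases hx₂ : x ∈ B₂
      · exact hc₂ x hx₂
      · have hbot : nhdsWithin x B₂ = ⊥ := by
          rw [← Filter.not_neBot, ← mem_closure_iff_nhdsWithin_neBot, hB₂.closure_eq]
          exact hx₂
        show Filter.Tendsto F (nhdsWithin x B₂) _
        rw [hbot]
        exact Filter.tendsto_bot
  -- injectivity
  have hne1 : ∀ (x : M) (hx : x ∉ B₁),
      ‖UBS.radial Φ (h₂ ⟨x, memB₂of hx⟩ : EuclideanSpace ℝ (Fin n))‖ ≠ 1 := by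
    intro x hx h1
    apply hx
    have hs : (h₂ ⟨x, memB₂of hx⟩ : EuclideanSpace ℝ (Fin n)) ∈
        Metric.sphere (0 : EuclideanSpace ℝ (Fin n)) 1 := by
      rw [mem_sphere_zero_iff_norm, ← UBS.norm_radial Φ]
      exact h1
    exact (hmem₂ _ hs).1
  have hinj : Function.Injective F := by
    intro x x' h
    by_cases hx : x ∈ B₁ <;> by_cases hx' : x' ∈ B₁
    · rw [hF₁ x hx, hF₁ x' hx'] at h
      have e1 := UBS.hemi_injective 1 _ _ h
      have e2 := h₁.injective (Subtype.ext e1)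
      exact congrArg Subtype.val e2
    · exfalso
      rw [hF₁ x hx, hF₂ x' (memB₂of hx')] at h
      have hmix := UBS.hemi_mixed (mem_closedBall_zero_iff.1 (h₁ ⟨x, hx⟩).2)
        (by rw [UBS.norm_radial]; exact mem_closedBall_zero_iff.1 (h₂ ⟨x', memB₂of hx'⟩).2) h
      exact hne1 x' hx' hmix.2.1
    · exfalso
      rw [hF₁ x' hx', hF₂ x (memB₂of hx)] at h
      have hmix := UBS.hemi_mixed (mem_closedBall_zero_iff.1 (h₁ ⟨x', hx'⟩).2)
        (by rw [UBS.norm_radial]; exact mem_closedBall_zero_iff.1 (h₂ ⟨x, memB₂of hx⟩).2) h.symm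
      exact hne1 x hx hmix.2.1
    · rw [hF₂ x (memB₂of hx), hF₂ x' (memB₂of hx')] at h
      have e1 := UBS.hemi_injective (-1) _ _ h
      have e2 := UBS.radial_injective Φ hΦinj e1
      have e3 := h₂.injective (Subtype.ext e2)
      exact congrArg Subtype.val e3
  -- surjectivity
  have hsurj : ∀ z ∈ Metric.sphere (0 : EuclideanSpace ℝ (Fin (n + 1))) 1, ∃ x, F x = z := by
    intro z hz
    have hz1 : ‖z‖ = 1 := mem_sphere_zero_iff_norm.1 hz
    have hsum : ‖UBS.initE z‖ ^ 2 + (z (Fin.last n)) ^ 2 = 1 := by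
      rw [← UBS.norm_snocE_sq, UBS.snocE_initE, hz1]
      norm_num
    have hy1 : ‖UBS.initE z‖ ≤ 1 := by
      nlinarith [norm_nonneg (UBS.initE z), sq_nonneg (z (Fin.last n))]
    by_cases hc : 0 ≤ z (Fin.last n)
    · refine ⟨↑(h₁.symm ⟨UBS.initE z, mem_closedBall_zero_iff.2 hy1⟩), ?_⟩
      have hx : (↑(h₁.symm ⟨UBS.initE z, mem_closedBall_zero_iff.2 hy1⟩) : M) ∈ B₁ :=
        (h₁.symm ⟨UBS.initE z, mem_closedBall_zero_iff.2 hy1⟩).2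
      rw [hF₁ _ hx, Subtype.coe_eta, Homeomorph.apply_symm_apply]
      show UBS.hemi 1 (UBS.initE z) = z
      have e1 : (1 : ℝ) * Real.sqrt (1 - ‖UBS.initE z‖ ^ 2) = z (Fin.last n) := by
        rw [one_mul]
        have e2 : 1 - ‖UBS.initE z‖ ^ 2 = (z (Fin.last n)) ^ 2 := by linarith
        rw [e2, Real.sqrt_sq hc]
      rw [UBS.hemi, e1, UBS.snocE_initE]
    · have hcneg : z (Fin.last n) < 0 := lt_of_not_ge hc
      have hylt : ‖UBS.initE z‖ < 1 := by
        nlinarith [norm_nonneg (UBS.initE z)]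
      obtain ⟨v, hv, hvn⟩ := UBS.radial_surj Φ hΦsurj (UBS.initE z)
      have hv1 : ‖v‖ ≤ 1 := by rw [hvn]; exact le_of_lt hylt
      refine ⟨↑(h₂.symm ⟨v, mem_closedBall_zero_iff.2 hv1⟩), ?_⟩
      have hx₂ : (↑(h₂.symm ⟨v, mem_closedBall_zero_iff.2 hv1⟩) : M) ∈ B₂ :=
        (h₂.symm ⟨v, mem_closedBall_zero_iff.2 hv1⟩).2
      rw [hF₂ _ hx₂, Subtype.coe_eta, Homeomorph.apply_symm_apply]
      show UBS.hemi (-1) (UBS.radial Φ v) = z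
      rw [hv]
      show UBS.snocE (UBS.initE z) ((-1) * Real.sqrt (1 - ‖UBS.initE z‖ ^ 2)) = z
      have e1 : (-1 : ℝ) * Real.sqrt (1 - ‖UBS.initE z‖ ^ 2) = z (Fin.last n) := by
        have e2 : 1 - ‖UBS.initE z‖ ^ 2 = (z (Fin.last n)) ^ 2 := by linarith
        rw [e2, Real.sqrt_sq_eq_abs, abs_of_neg hcneg]
        ring
      rw [e1, UBS.snocE_initE]
  -- assemble the homeomorphism
  let F' : M → Metric.sphere (0 : EuclideanSpace ℝ (Fin (n + 1))) 1 :=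
    fun x => ⟨F x, hmemS x⟩
  have hinj' : Function.Injective F' := fun a b hab => hinj (congrArg Subtype.val hab)
  have hsurj' : Function.Surjective F' := by
    intro z
    obtain ⟨x, hx⟩ := hsurj ↑z z.2
    exact ⟨x, Subtype.ext hx⟩
  let e : M ≃ Metric.sphere (0 : EuclideanSpace ℝ (Fin (n + 1))) 1 :=
    Equiv.ofBijective F' ⟨hinj', hsurj'⟩
  have hec : Continuous e := Continuous.subtype_mk hFc hmemS
  exact ⟨Continuous.homeoOfEquivCompactToT2 (f := e) hec⟩
end
end

section
/- Complexification of a real analytic function: let f : ℝⁿ → ℝ be analytic at a point x ∈ ℝⁿ. Then there exist an open set U ⊆ ℂⁿ containing ι(x) and a function F : ℂⁿ → ℂ which is complex analytic (holomorphic) at every point of U, such that F(ι(y)) = f(y) for every y ∈ ℝⁿ with ι(y) ∈ U, where ι : ℝⁿ → ℂⁿ is the coordinatewise inclusion sending (y₁,…,yₙ) to (y₁+0i,…,yₙ+0i). -/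
set_option maxHeartbeats 1000000 in
section

noncomputable def eR (n : ℕ) (k : Fin n) : Fin n → ℝ := Pi.single k 1

noncomputable def cxTerm (n m : ℕ) (j : Fin m → Fin n) :
    ContinuousMultilinearMap ℂ (fun _ : Fin m => (Fin n → ℂ)) ℂ :=
  (ContinuousMultilinearMap.mkPiAlgebra ℂ (Fin m) ℂ).compContinuousLinearMap
    (fun i => ContinuousLinearMap.proj (j i))

lemma cxTerm_apply (n m : ℕ) (j : Fin m → Fin n) (w : Fin m → (Fin n → ℂ)) :
    cxTerm n m j w = ∏ i, w i (j i) := by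
  simp [cxTerm]

lemma norm_cxTerm_le (n m : ℕ) (j : Fin m → Fin n) : ‖cxTerm n m j‖ ≤ 1 := by
  refine (ContinuousMultilinearMap.norm_compContinuousLinearMap_le _ _).trans ?_
  have hproj : ∀ i : Fin m, ‖(ContinuousLinearMap.proj (j i) :
      (Fin n → ℂ) →L[ℂ] ℂ)‖ ≤ 1 := fun i =>
    ContinuousLinearMap.opNorm_le_bound _ zero_le_one fun v => by
      simpa using norm_le_pi_norm v (j i)
  have h1 : ‖ContinuousMultilinearMap.mkPiAlgebra ℂ (Fin m) ℂ‖ = 1 :=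
    ContinuousMultilinearMap.norm_mkPiAlgebra
  calc ‖ContinuousMultilinearMap.mkPiAlgebra ℂ (Fin m) ℂ‖ *
        ∏ i, ‖(ContinuousLinearMap.proj (j i) : (Fin n → ℂ) →L[ℂ] ℂ)‖
      ≤ 1 * ∏ i : Fin m, (1 : ℝ) := by
        refine mul_le_mul (le_of_eq h1) (Finset.prod_le_prod
          (fun i _ => norm_nonneg _) (fun i _ => hproj i))
          (Finset.prod_nonneg fun i _ => norm_nonneg _) zero_le_one
    _ = 1 := by simp

noncomputable def cxSeries (n : ℕ) (p : FormalMultilinearSeries ℝ (Fin n → ℝ) ℝ) :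
    FormalMultilinearSeries ℂ (Fin n → ℂ) ℂ :=
  fun m => ∑ j : Fin m → Fin n,
    ((p m fun i => eR n (j i) : ℝ) : ℂ) • cxTerm n m j

lemma cxSeries_apply (n : ℕ) (p : FormalMultilinearSeries ℝ (Fin n → ℝ) ℝ) (m : ℕ)
    (w : Fin m → (Fin n → ℂ)) :
    cxSeries n p m w = ∑ j : Fin m → Fin n,
      ((p m fun i => eR n (j i) : ℝ) : ℂ) * ∏ i, w i (j i) := by
  rw [show cxSeries n p m = ∑ j : Fin m → Fin n,
      ((p m fun i => eR n (j i) : ℝ) : ℂ) • cxTerm n m j from rfl]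
  rw [ContinuousMultilinearMap.sum_apply]
  exact Finset.sum_congr rfl fun j _ => by rw [ContinuousMultilinearMap.smul_apply,
    cxTerm_apply, smul_eq_mul]

lemma real_expand (n : ℕ) (p : FormalMultilinearSeries ℝ (Fin n → ℝ) ℝ) (m : ℕ)
    (v : Fin m → (Fin n → ℝ)) :
    p m v = ∑ j : Fin m → Fin n, (∏ i, v i (j i)) * (p m fun i => eR n (j i)) := by
  have hv : ∀ i : Fin m, v i = ∑ k : Fin n, v i k • eR n k := by
    intro i; ext k'
    simp [eR, Pi.single_apply, Finset.sum_ite_eq', mul_comm]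
  calc p m v = p m (fun i => ∑ k : Fin n, v i k • eR n k) := by
        congr 1; ext1 i; exact hv i
    _ = ∑ j : Fin m → Fin n, p m (fun i => v i (j i) • eR n (j i)) :=
        (p m).map_sum (fun i k => v i k • eR n k)
    _ = ∑ j : Fin m → Fin n, (∏ i, v i (j i)) * (p m fun i => eR n (j i)) := by
        refine Finset.sum_congr rfl fun j _ => ?_
        rw [(p m).map_smul_univ (fun i => v i (j i)) (fun i => eR n (j i))]
        rw [smul_eq_mul]

lemma cxSeries_real (n : ℕ) (p : FormalMultilinearSeries ℝ (Fin n → ℝ) ℝ) (m : ℕ)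
    (v : Fin m → (Fin n → ℝ)) :
    cxSeries n p m (fun i k => (v i k : ℂ)) = ((p m v : ℝ) : ℂ) := by
  rw [cxSeries_apply, real_expand]
  push_cast
  refine Finset.sum_congr rfl fun j _ => ?_
  ring

lemma cxSeries_norm_le (n : ℕ) (p : FormalMultilinearSeries ℝ (Fin n → ℝ) ℝ) (m : ℕ) :
    ‖cxSeries n p m‖ ≤ (n : ℝ) ^ m * ‖p m‖ := by
  rw [show cxSeries n p m = ∑ j : Fin m → Fin n,
      ((p m fun i => eR n (j i) : ℝ) : ℂ) • cxTerm n m j from rfl]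
  refine (norm_sum_le _ _).trans ?_
  have hterm : ∀ j : Fin m → Fin n,
      ‖((p m fun i => eR n (j i) : ℝ) : ℂ) • cxTerm n m j‖ ≤ ‖p m‖ := by
    intro j
    rw [norm_smul ((p m fun i => eR n (j i) : ℝ) : ℂ) (cxTerm n m j)]
    have h1 : ‖((p m fun i => eR n (j i) : ℝ) : ℂ)‖ ≤ ‖p m‖ := by
      rw [Complex.norm_real]
      refine ((p m).le_opNorm _).trans ?_
      have he : ∀ i : Fin m, ‖eR n (j i)‖ = 1 := fun i => by
        rw [eR, Pi.norm_single]; simp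
      simp [he]
    calc ‖((p m fun i => eR n (j i) : ℝ) : ℂ)‖ * ‖cxTerm n m j‖
        ≤ ‖p m‖ * 1 := mul_le_mul h1 (norm_cxTerm_le n m j) (norm_nonneg _)
          (norm_nonneg _)
      _ = ‖p m‖ := mul_one _
  calc ∑ j : Fin m → Fin n, ‖((p m fun i => eR n (j i) : ℝ) : ℂ) • cxTerm n m j‖
      ≤ ∑ _j : Fin m → Fin n, ‖p m‖ := Finset.sum_le_sum fun j _ => hterm j
    _ = (n : ℝ) ^ m * ‖p m‖ := by
        rw [Finset.sum_const, Finset.card_univ, Fintype.card_fun, Fintype.card_fin,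
          Fintype.card_fin, nsmul_eq_mul]
        push_cast
        ring

end
lemma cxSeries_radius_pos (n : ℕ) (p : FormalMultilinearSeries ℝ (Fin n → ℝ) ℝ)
    (hp : 0 < p.radius) : 0 < (cxSeries n p).radius := by
  obtain ⟨r, hr0, hrlt⟩ := ENNReal.lt_iff_exists_nnreal_btwn.1 hp
  obtain ⟨C, hC0, hbound⟩ := p.norm_mul_pow_le_of_lt_radius hrlt
  have hrpos : 0 < r := by exact_mod_cast hr0
  set r' : NNReal := r / (n + 1) with hr'
  have hr'pos : 0 < r' := by
    rw [hr']
    positivity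
  have hcoe : (r' : ℝ) = (r : ℝ) / (n + 1) := by
    rw [hr']
    push_cast
    rfl
  have key : ∀ m : ℕ, ‖cxSeries n p m‖ * (r' : ℝ) ^ m ≤ C := by
    intro m
    have h1 := cxSeries_norm_le n p m
    have h2 : (0:ℝ) < (n:ℝ) + 1 := by positivity
    have hfrac : ((n : ℝ) / ((n:ℝ) + 1)) ^ m ≤ 1 := by
      apply pow_le_one₀ (by positivity)
      rw [div_le_one h2]; linarith
    calc ‖cxSeries n p m‖ * (r' : ℝ) ^ m
        ≤ ((n : ℝ) ^ m * ‖p m‖) * (r' : ℝ) ^ m :=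
          mul_le_mul_of_nonneg_right h1 (pow_nonneg (by positivity) m)
      _ = (‖p m‖ * (r : ℝ) ^ m) * ((n : ℝ) / ((n:ℝ) + 1)) ^ m := by
          rw [hcoe, div_pow]
          ring
      _ ≤ (‖p m‖ * (r : ℝ) ^ m) * 1 := by
          refine mul_le_mul_of_nonneg_left hfrac ?_
          positivity
      _ = ‖p m‖ * (r : ℝ) ^ m := mul_one _
      _ ≤ C := hbound m
  have hle := (cxSeries n p).le_radius_of_bound C key
  exact lt_of_lt_of_le (by exact_mod_cast hr'pos) hle

/-- Complexification of a real analytic function: a function `f : ℝⁿ → ℝ` analytic at a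
point extends to a holomorphic function on a neighborhood of that point in `ℂⁿ`. -/
theorem complexification_of_real_analytic
    (n : ℕ) (f : (Fin n → ℝ) → ℝ) (x : Fin n → ℝ)
    (hf : AnalyticAt ℝ f x) :
    ∃ (U : Set (Fin n → ℂ)) (F : (Fin n → ℂ) → ℂ),
      IsOpen U ∧
      (fun i => (x i : ℂ)) ∈ U ∧
      AnalyticOnNhd ℂ F U ∧
      ∀ y : Fin n → ℝ, (fun i => (y i : ℂ)) ∈ U →
        F (fun i => (y i : ℂ)) = (f y : ℂ) := by
  obtain ⟨p, r₀, hp⟩ := hf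
  set q := cxSeries n p with hqdef
  have hqpos : 0 < q.radius := cxSeries_radius_pos n p (lt_of_lt_of_le hp.r_pos hp.r_le)
  set c : Fin n → ℂ := fun i => (x i : ℂ) with hc
  set ρ := min r₀ q.radius with hρ
  have hρpos : 0 < ρ := lt_min hp.r_pos hqpos
  refine ⟨Metric.eball c ρ, fun z => q.sum (z - c), EMetric.isOpen_ball,
    EMetric.mem_ball_self hρpos, ?_, ?_⟩
  · intro z hz
    have hz' : z - c ∈ Metric.eball (0 : Fin n → ℂ) q.radius := by
      rw [EMetric.mem_ball, edist_zero_right]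
      rw [EMetric.mem_ball, edist_eq_enorm_sub] at hz
      exact lt_of_lt_of_le hz (min_le_right _ _)
    have hsum : AnalyticAt ℂ q.sum (z - c) :=
      (q.hasFPowerSeriesOnBall hqpos).analyticOnNhd _ (by simpa using hz')
    have hinner : AnalyticAt ℂ (fun w : Fin n → ℂ => w - c) z :=
      analyticAt_id.sub analyticAt_const
    have hcomp : AnalyticAt ℂ (q.sum ∘ fun w : Fin n → ℂ => w - c) z :=
      AnalyticAt.comp (f := fun w : Fin n → ℂ => w - c) (x := z) hsum hinner
    exact hcomp
  · intro y hy
    have hyx : (fun i => (y i : ℂ)) - c = fun k => ((y k - x k : ℝ) : ℂ) := by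
      funext k
      simp [hc, Pi.sub_apply]
    have hnn : ‖(fun k => ((y k - x k : ℝ) : ℂ))‖₊ = ‖y - x‖₊ := by
      simp [Pi.nnnorm_def, ← Complex.ofReal_sub]
    have hmem : y - x ∈ Metric.eball (0 : Fin n → ℝ) r₀ := by
      rw [EMetric.mem_ball, edist_zero_right, enorm_eq_nnnorm]
      rw [EMetric.mem_ball, edist_eq_enorm_sub, hyx, enorm_eq_nnnorm, hnn] at hy
      exact lt_of_lt_of_le hy (min_le_left _ _)
    have hsum1 := hp.hasSum hmem
    rw [show x + (y - x) = y by abel] at hsum1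
    have hsum2 := Complex.ofRealCLM.hasSum hsum1
    have hterm : (fun m => Complex.ofRealCLM (p m fun _ => y - x)) =
        fun m => q m (fun _ => (fun i => (y i : ℂ)) - c) := by
      funext m
      rw [hyx, hqdef, show (fun (_ : Fin m) (k : Fin n) => ((y k - x k : ℝ) : ℂ)) =
        (fun (i : Fin m) (k : Fin n) => (((fun _ => y - x) i k : ℝ) : ℂ)) from rfl,
        cxSeries_real n p m (fun _ => y - x)]
      rfl
    rw [hterm] at hsum2
    exact hsum2.tsum_eq
end
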